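/- Let X₁, X₂ : ℝ³ → ℝ³ be C¹ maps and f : ℝ³ → ℝ be C², define X_f = (X₁f)·X₂ − (X₂f)·X₁, and let p ∈ ℝ³ satisfy (X₁f)(p) = (X₂f)(p) = 0. Assume moreover that X₁(p) and X₂(p) are linearly independent, and let D_p = span{X₁(p), X₂(p)} ⊆ ℝ³. Then the Fréchet derivative D X_f(p) maps all of ℝ³ into D_p; in particular it restricts to an endomorphism of D_p, whose matrix in the basis (X₁(p), X₂(p)) is [[−X₁(X₂f)(p), −X₂(X₂f)(p)], [X₁(X₁f)(p), X₂(X₁f)(p)]]. Consequently the determinant of this restricted endomorphism equals X₁(X₁f)(p)·X₂(X₂f)(p) − X₁(X₂f)(p)·X₂(X₁f)(p) (the determinant of the horizontal Hessian of f at p), and its trace equals X₂(X₁f)(p) − X₁(X₂f)(p) = ([X₂,X₁]f)(p). -/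

import Mathlib

/-- For C¹ vector fields `X₁, X₂` on `ℝ³` and a C² function `f`, with
`X_f = (X₁f)X₂ − (X₂f)X₁` and `p` a point where `X₁f(p) = X₂f(p) = 0` and
`X₁(p), X₂(p)` are linearly independent, the Fréchet derivative `DX_f(p)` maps `ℝ³`
into `D_p = span{X₁(p), X₂(p)}`; in the basis `(X₁(p), X₂(p))` the restricted
endomorphism has matrix `[[−X₁(X₂f)(p), −X₂(X₂f)(p)], [X₁(X₁f)(p), X₂(X₁f)(p)]]`,
whose determinant is `det Hess_H f(p)` and whose trace is `([X₂,X₁]f)(p)`. -/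
theorem characteristic_vector_field_restricted_matrix
    (X₁ X₂ : (Fin 3 → ℝ) → (Fin 3 → ℝ)) (f : (Fin 3 → ℝ) → ℝ)
    (hX₁ : ContDiff ℝ 1 X₁) (hX₂ : ContDiff ℝ 1 X₂) (hf : ContDiff ℝ 2 f)
    (X₁f X₂f : (Fin 3 → ℝ) → ℝ)
    (hX₁f : X₁f = fun x => fderiv ℝ f x (X₁ x))
    (hX₂f : X₂f = fun x => fderiv ℝ f x (X₂ x))
    (Xf : (Fin 3 → ℝ) → (Fin 3 → ℝ))
    (hXf : Xf = fun x => X₁f x • X₂ x - X₂f x • X₁ x)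
    (p : Fin 3 → ℝ) (hp1 : X₁f p = 0) (hp2 : X₂f p = 0)
    (hind : LinearIndependent ℝ ![X₁ p, X₂ p])
    (Dp : Submodule ℝ (Fin 3 → ℝ))
    (hDp : Dp = Submodule.span ℝ {X₁ p, X₂ p}) :
    (∀ v : Fin 3 → ℝ, fderiv ℝ Xf p v ∈ Dp) ∧
    fderiv ℝ Xf p (X₁ p)
      = (-(fderiv ℝ X₂f p (X₁ p))) • X₁ p + (fderiv ℝ X₁f p (X₁ p)) • X₂ p ∧
    fderiv ℝ Xf p (X₂ p)
      = (-(fderiv ℝ X₂f p (X₂ p))) • X₁ p + (fderiv ℝ X₁f p (X₂ p)) • X₂ p ∧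
    Matrix.det !![-(fderiv ℝ X₂f p (X₁ p)), -(fderiv ℝ X₂f p (X₂ p));
                  fderiv ℝ X₁f p (X₁ p), fderiv ℝ X₁f p (X₂ p)]
      = fderiv ℝ X₁f p (X₁ p) * fderiv ℝ X₂f p (X₂ p)
        - fderiv ℝ X₂f p (X₁ p) * fderiv ℝ X₁f p (X₂ p) ∧
    Matrix.trace !![-(fderiv ℝ X₂f p (X₁ p)), -(fderiv ℝ X₂f p (X₂ p));
                    fderiv ℝ X₁f p (X₁ p), fderiv ℝ X₁f p (X₂ p)]
      = fderiv ℝ X₁f p (X₂ p) - fderiv ℝ X₂f p (X₁ p) := by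
  have hdf : ContDiff ℝ 1 (fderiv ℝ f) := hf.fderiv_right (by norm_num)
  have h1 : ContDiff ℝ 1 X₁f := by rw [hX₁f]; exact hdf.clm_apply hX₁
  have h2 : ContDiff ℝ 1 X₂f := by rw [hX₂f]; exact hdf.clm_apply hX₂
  have hd1 : HasFDerivAt X₁f (fderiv ℝ X₁f p) p :=
    (h1.differentiable one_ne_zero p).hasFDerivAt
  have hd2 : HasFDerivAt X₂f (fderiv ℝ X₂f p) p :=
    (h2.differentiable one_ne_zero p).hasFDerivAt
  have hdX1 : HasFDerivAt X₁ (fderiv ℝ X₁ p) p :=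
    (hX₁.differentiable one_ne_zero p).hasFDerivAt
  have hdX2 : HasFDerivAt X₂ (fderiv ℝ X₂ p) p :=
    (hX₂.differentiable one_ne_zero p).hasFDerivAt
  have key : fderiv ℝ Xf p =
      (fderiv ℝ X₁f p).smulRight (X₂ p) - (fderiv ℝ X₂f p).smulRight (X₁ p) := by
    have h : HasFDerivAt Xf
        ((X₁f p • fderiv ℝ X₂ p + (fderiv ℝ X₁f p).smulRight (X₂ p)) -
         (X₂f p • fderiv ℝ X₁ p + (fderiv ℝ X₂f p).smulRight (X₁ p))) p := by
      rw [hXf]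
      exact (hd1.smul hdX2).sub (hd2.smul hdX1)
    rw [hp1, hp2, zero_smul, zero_smul, zero_add, zero_add] at h
    exact h.fderiv
  have keyv : ∀ v, fderiv ℝ Xf p v =
      (fderiv ℝ X₁f p v) • X₂ p - (fderiv ℝ X₂f p v) • X₁ p := by
    intro v; rw [key]; simp
  refine ⟨?_, ?_, ?_, ?_, ?_⟩
  · intro v
    rw [keyv, hDp]
    exact Submodule.sub_mem _
      (Submodule.smul_mem _ _ (Submodule.subset_span (by simp)))
      (Submodule.smul_mem _ _ (Submodule.subset_span (by simp)))
  · rw [keyv]; module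
  · rw [keyv]; module
  · simp [Matrix.det_fin_two_of]; ring
  · simp [Matrix.trace_fin_two_of]; ring
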